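/- arXiv:math/9812128 — 3 statements merged into one kernel-verified Lean document; each statement's English description precedes it below -/
import Mathlib

section
/- There do not exist homogeneous polynomials P, Q, R ∈ ℂ[a,b,c], not all zero and of the same degree, such that a·P² + b·Q² + c·R² = 0 identically. -/
open MvPolynomial

noncomputable def phi3 (i : Fin 3) : MvPolynomial (Fin 3) ℂ →ₐ[ℂ] MvPolynomial (Fin 3) ℂ :=
  aeval (fun k => if k = i then 0 else X k)

lemma phi3_X_self (i : Fin 3) : phi3 i (X i) = 0 := by simp [phi3]

lemma phi3_X_ne {i j : Fin 3} (h : j ≠ i) : phi3 i (X j) = X j := by simp [phi3, h]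

lemma X_dvd_of_phi3 {i : Fin 3} {P : MvPolynomial (Fin 3) ℂ} (h : phi3 i P = 0) : X i ∣ P := by
  rw [← Ideal.mem_span_singleton, ← Ideal.Quotient.eq_zero_iff_mem]
  have hXi : Ideal.Quotient.mk (Ideal.span {(X i : MvPolynomial (Fin 3) ℂ)}) (X i) = 0 := by
    rw [Ideal.Quotient.eq_zero_iff_mem]; exact Ideal.subset_span rfl
  have key : (Ideal.Quotient.mkₐ ℂ (Ideal.span {(X i : MvPolynomial (Fin 3) ℂ)})).comp (phi3 i)
      = Ideal.Quotient.mkₐ ℂ _ := by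
    apply MvPolynomial.algHom_ext
    intro k
    by_cases hk : k = i
    · subst hk
      simp only [AlgHom.comp_apply, phi3_X_self, map_zero, Ideal.Quotient.mkₐ_eq_mk, hXi]
    · simp only [AlgHom.comp_apply, phi3_X_ne hk]
  have h2 := DFunLike.congr_fun key P
  simp only [AlgHom.comp_apply, Ideal.Quotient.mkₐ_eq_mk] at h2
  rw [← h2, h, map_zero]

lemma aux2 (i j : Fin 3) (hji : j ≠ i) :
    ∀ F G : MvPolynomial (Fin 3) ℂ, X i * F ^ 2 + X j * G ^ 2 = 0 → F = 0 ∧ G = 0 := by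
  suffices H : ∀ n : ℕ, ∀ F G : MvPolynomial (Fin 3) ℂ,
      degreeOf i F = n → X i * F ^ 2 + X j * G ^ 2 = 0 → F = 0 ∧ G = 0 by
    exact fun F G h => H _ F G rfl h
  intro n
  induction n using Nat.strong_induction_on with
  | _ n IH =>
  intro F G hdeg heq
  by_cases hF : F = 0
  · subst hF
    refine ⟨rfl, ?_⟩
    have h0 : X j * G ^ 2 = 0 := by linear_combination heq
    rcases mul_eq_zero.mp h0 with h | h
    · exact absurd h (X_ne_zero j)
    · exact pow_eq_zero_iff (two_ne_zero) |>.mp h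
  · exfalso
    -- X i divides G
    have h1 : X j * (phi3 i G) ^ 2 = 0 := by
      have h := congrArg (phi3 i) heq
      rw [map_add, map_mul, map_mul, map_pow, map_pow, map_zero, phi3_X_self,
        phi3_X_ne hji] at h
      linear_combination h
    have hG0 : phi3 i G = 0 := by
      rcases mul_eq_zero.mp h1 with h | h
      · exact absurd h (X_ne_zero j)
      · exact pow_eq_zero_iff (two_ne_zero) |>.mp h
    obtain ⟨G1, hG1⟩ := X_dvd_of_phi3 hG0
    subst hG1
    have e1 : X i * (F ^ 2 + X j * (X i * G1 ^ 2)) = 0 := by linear_combination heq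
    have e2 : F ^ 2 + X j * (X i * G1 ^ 2) = 0 :=
      (mul_eq_zero.mp e1).resolve_left (X_ne_zero i)
    -- X i divides F
    have h3 : (phi3 i F) ^ 2 = 0 := by
      have h := congrArg (phi3 i) e2
      rw [map_add, map_mul, map_mul, map_pow, map_pow, map_zero, phi3_X_self,
        phi3_X_ne hji] at h
      linear_combination h
    have hF0 : phi3 i F = 0 := pow_eq_zero_iff (two_ne_zero) |>.mp h3
    obtain ⟨F1, hF1⟩ := X_dvd_of_phi3 hF0
    subst hF1
    have e3 : X i * (X i * F1 ^ 2 + X j * G1 ^ 2) = 0 := by linear_combination e2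
    have e4 : X i * F1 ^ 2 + X j * G1 ^ 2 = 0 :=
      (mul_eq_zero.mp e3).resolve_left (X_ne_zero i)
    have hF1ne : F1 ≠ 0 := right_ne_zero_of_mul hF
    have hd : degreeOf i (F1 * X i) = degreeOf i F1 + 1 :=
      (degreeOf_mul_X_eq_degreeOf_add_one_iff i F1).mpr hF1ne
    rw [mul_comm] at hdeg
    rw [hd] at hdeg
    have := IH (degreeOf i F1) (by omega) F1 G1 rfl e4
    exact hF1ne this.1

lemma aux3 : ∀ P Q R : MvPolynomial (Fin 3) ℂ,
    X 0 * P ^ 2 + X 1 * Q ^ 2 + X 2 * R ^ 2 = 0 → P = 0 ∧ Q = 0 ∧ R = 0 := by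
  suffices H : ∀ n : ℕ, ∀ P Q R : MvPolynomial (Fin 3) ℂ, degreeOf 2 P = n →
      X 0 * P ^ 2 + X 1 * Q ^ 2 + X 2 * R ^ 2 = 0 → P = 0 ∧ Q = 0 ∧ R = 0 by
    exact fun P Q R h => H _ P Q R rfl h
  intro n
  induction n using Nat.strong_induction_on with
  | _ n IH =>
  intro P Q R hdeg heq
  by_cases hP : P = 0
  · subst hP
    obtain ⟨hQ, hR⟩ := aux2 1 2 (by decide) Q R (by linear_combination heq)
    exact ⟨rfl, hQ, hR⟩
  · exfalso
    have h1 : X 0 * (phi3 2 P) ^ 2 + X 1 * (phi3 2 Q) ^ 2 = 0 := by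
      have h := congrArg (phi3 2) heq
      rw [map_add, map_add, map_mul, map_mul, map_mul, map_pow, map_pow, map_pow, map_zero,
        phi3_X_self, phi3_X_ne (show (0 : Fin 3) ≠ 2 by decide),
        phi3_X_ne (show (1 : Fin 3) ≠ 2 by decide)] at h
      linear_combination h
    obtain ⟨hP0, hQ0⟩ := aux2 0 1 (by decide) _ _ h1
    obtain ⟨P1, hP1⟩ := X_dvd_of_phi3 hP0
    obtain ⟨Q1, hQ1⟩ := X_dvd_of_phi3 hQ0
    subst hP1; subst hQ1
    have e1 : X 2 * (X 2 * (X 0 * P1 ^ 2 + X 1 * Q1 ^ 2) + R ^ 2) = 0 := by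
      linear_combination heq
    have e2 : X 2 * (X 0 * P1 ^ 2 + X 1 * Q1 ^ 2) + R ^ 2 = 0 :=
      (mul_eq_zero.mp e1).resolve_left (X_ne_zero 2)
    have h2 : (phi3 2 R) ^ 2 = 0 := by
      have h := congrArg (phi3 2) e2
      rw [map_add, map_mul, map_add, map_mul, map_mul, map_pow, map_pow, map_pow, map_zero,
        phi3_X_self, phi3_X_ne (show (0 : Fin 3) ≠ 2 by decide),
        phi3_X_ne (show (1 : Fin 3) ≠ 2 by decide)] at h
      linear_combination h
    have hR0 : phi3 2 R = 0 := pow_eq_zero_iff (two_ne_zero) |>.mp h2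
    obtain ⟨R1, hR1⟩ := X_dvd_of_phi3 hR0
    subst hR1
    have e3 : X 2 * (X 2 * (X 0 * P1 ^ 2 + X 1 * Q1 ^ 2 + X 2 * R1 ^ 2)) = 0 := by
      linear_combination X 2 * e2
    have e4 : X 0 * P1 ^ 2 + X 1 * Q1 ^ 2 + X 2 * R1 ^ 2 = 0 := by
      have := (mul_eq_zero.mp e3).resolve_left (X_ne_zero 2)
      exact (mul_eq_zero.mp this).resolve_left (X_ne_zero 2)
    have hP1ne : P1 ≠ 0 := right_ne_zero_of_mul hP
    have hd : degreeOf 2 (P1 * X 2) = degreeOf 2 P1 + 1 :=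
      (degreeOf_mul_X_eq_degreeOf_add_one_iff 2 P1).mpr hP1ne
    rw [mul_comm] at hdeg
    rw [hd] at hdeg
    have := IH (degreeOf 2 P1) (by omega) P1 Q1 R1 rfl e4
    exact hP1ne this.1

/-- There are no homogeneous polynomials `P, Q, R ∈ ℂ[a,b,c]` of the same
degree, not all zero, with `a·P² + b·Q² + c·R² = 0`. -/
theorem no_section_of_conic_bundle :
    ¬ ∃ (d : ℕ) (P Q R : MvPolynomial (Fin 3) ℂ),
      P.IsHomogeneous d ∧ Q.IsHomogeneous d ∧ R.IsHomogeneous d ∧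
      ¬(P = 0 ∧ Q = 0 ∧ R = 0) ∧
      X 0 * P ^ 2 + X 1 * Q ^ 2 + X 2 * R ^ 2 = 0 := by
  rintro ⟨d, P, Q, R, -, -, -, hne, heq⟩
  exact hne (aux3 P Q R heq)
end

section
/- Let V be a complex vector space of dimension n ≥ 2 and p ≥ 2 an integer. Let ψ₁, ψ₂ ∈ S²V* be linearly independent quadratic forms. Then it is not the case that every linear combination λψ₁^p + μψ₂^p (λ, μ ∈ ℂ) is of the form ψ^p for some quadratic form ψ ∈ S²V*. -/
open MvPolynomial

namespace NotAllPthAux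

open Finset

variable {σ : Type*} {F : Type*} [Field F]

lemma top_comp_ne_zero {f : MvPolynomial σ F} (hf : f ≠ 0) :
    homogeneousComponent f.totalDegree f ≠ 0 := by
  obtain ⟨m, hm, hdeg⟩ : ∃ m ∈ f.support, f.totalDegree = (m.sum fun _ e => e) :=
    Finset.exists_mem_eq_sup _ (support_nonempty.mpr hf) _
  have hdm : Finsupp.degree m = f.totalDegree := by
    rw [hdeg]; rfl
  intro h0
  have hc := coeff_homogeneousComponent (n := f.totalDegree) (φ := f) m
  rw [h0, if_pos hdm] at hc
  exact (mem_support_iff.mp hm) hc.symm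

lemma sub_top_lt {f : MvPolynomial σ F}
    (h : f - homogeneousComponent f.totalDegree f ≠ 0) :
    (f - homogeneousComponent f.totalDegree f).totalDegree < f.totalDegree := by
  rcases Nat.eq_zero_or_pos f.totalDegree with hd | hd
  · exfalso
    have hs := sum_homogeneousComponent f
    rw [hd] at hs h
    simp only [zero_add, Finset.range_one, Finset.sum_singleton] at hs
    exact h (by rw [hs, sub_self])
  · have : ∀ b ∈ (f - homogeneousComponent f.totalDegree f).support,
        (b.sum fun _ e => e) < f.totalDegree := by
      intro b hb
      have hcb : coeff b (f - homogeneousComponent f.totalDegree f) ≠ 0 :=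
        mem_support_iff.mp hb
      rw [coeff_sub, coeff_homogeneousComponent] at hcb
      by_cases hbd : Finsupp.degree b = f.totalDegree
      · rw [if_pos hbd, sub_self] at hcb; exact absurd rfl hcb
      · rw [if_neg hbd, sub_zero] at hcb
        have : (b.sum fun _ e => e) ≤ f.totalDegree := le_totalDegree (mem_support_iff.mpr hcb)
        exact lt_of_le_of_ne this hbd
    exact (Finset.sup_lt_iff (by simpa using hd)).mpr this

lemma totalDegree_mul_eq [IsDomain F] {f g : MvPolynomial σ F} (hf : f ≠ 0) (hg : g ≠ 0) :
    (f * g).totalDegree = f.totalDegree + g.totalDegree := by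
  classical
  refine le_antisymm (totalDegree_mul f g) ?_
  set d := f.totalDegree with hdd
  set e := g.totalDegree with hee
  set fd := homogeneousComponent d f with hfd'
  set ge := homogeneousComponent e g with hge'
  have hfd : fd ≠ 0 := top_comp_ne_zero hf
  have hge : ge ≠ 0 := top_comp_ne_zero hg
  have hprod : fd * ge ≠ 0 := mul_ne_zero hfd hge
  have hhom : (fd * ge).IsHomogeneous (d + e) :=
    (homogeneousComponent_isHomogeneous d f).mul (homogeneousComponent_isHomogeneous e g)
  obtain ⟨m, hm⟩ := support_nonempty.mpr hprod
  have hcm : coeff m (fd * ge) ≠ 0 := mem_support_iff.mp hm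
  have hmdeg : Finsupp.degree m = d + e := by
    by_contra hne
    exact hcm (hhom.coeff_eq_zero hne)
  -- coefficients of the cross terms vanish
  have key : coeff m (f * g) = coeff m (fd * ge) := by
    have hid : f * g = fd * ge + ((f - fd) * g + fd * (g - ge)) := by ring
    have hz1 : coeff m ((f - fd) * g) = 0 := by
      by_cases h0 : f - fd = 0
      · rw [h0, zero_mul, coeff_zero]
      · apply coeff_eq_zero_of_totalDegree_lt
        have h1 : ((f - fd) * g).totalDegree ≤ (f - fd).totalDegree + e :=
          totalDegree_mul _ _
        have h2 : (f - fd).totalDegree < d := sub_top_lt h0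
        have : ((f - fd) * g).totalDegree < d + e := by omega
        rw [show (∑ i ∈ m.support, m i) = Finsupp.degree m from rfl, hmdeg]
        exact this
    have hz2 : coeff m (fd * (g - ge)) = 0 := by
      by_cases h0 : g - ge = 0
      · rw [h0, mul_zero, coeff_zero]
      · apply coeff_eq_zero_of_totalDegree_lt
        have h1 : (fd * (g - ge)).totalDegree ≤ fd.totalDegree + (g - ge).totalDegree :=
          totalDegree_mul _ _
        have h2 : (g - ge).totalDegree < e := sub_top_lt h0
        have h3 : fd.totalDegree ≤ d :=
          (homogeneousComponent_isHomogeneous d f).totalDegree_le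
        have : (fd * (g - ge)).totalDegree < d + e := by omega
        rw [show (∑ i ∈ m.support, m i) = Finsupp.degree m from rfl, hmdeg]
        exact this
    rw [hid, coeff_add, coeff_add, hz1, hz2, add_zero, add_zero]
  have : coeff m (f * g) ≠ 0 := by rw [key]; exact hcm
  have := le_totalDegree (mem_support_iff.mpr this)
  rw [show (m.sum fun _ e => e) = Finsupp.degree m from rfl, hmdeg] at this
  exact this

section Y
variable [IsDomain F]

lemma totalDegree_pow_eq {f : MvPolynomial σ F} (hf : f ≠ 0) (k : ℕ) :
    (f ^ k).totalDegree = k * f.totalDegree := by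
  induction k with
  | zero => simp
  | succ k ih =>
    rw [pow_succ, totalDegree_mul_eq (pow_ne_zero _ hf) hf, ih]; ring

lemma totalDegree_prod_eq {ι : Type*} (s : Finset ι) (f : ι → MvPolynomial σ F)
    (hf : ∀ i ∈ s, f i ≠ 0) :
    (∏ i ∈ s, f i).totalDegree = ∑ i ∈ s, (f i).totalDegree := by
  classical
  induction s using Finset.cons_induction with
  | empty => simp
  | cons a s ha ih =>
    rw [Finset.prod_cons, Finset.sum_cons,
      totalDegree_mul_eq (hf a (Finset.mem_cons_self a s))
        (Finset.prod_ne_zero_iff.mpr fun i hi => hf i (Finset.mem_cons_of_mem hi)),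
      ih fun i hi => hf i (Finset.mem_cons_of_mem hi)]

omit [IsDomain F] in
lemma eq_C_of_totalDegree_zero {f : MvPolynomial σ F} (hf : f.totalDegree = 0) :
    f = C (coeff 0 f) := by
  have hs := sum_homogeneousComponent f
  rw [hf] at hs
  simp only [zero_add, Finset.range_one, Finset.sum_singleton] at hs
  rw [← homogeneousComponent_zero (φ := f)]
  exact hs.symm

lemma isUnit_iff' {f : MvPolynomial σ F} :
    IsUnit f ↔ ∃ c : F, c ≠ 0 ∧ f = C c := by
  constructor
  · intro hu
    obtain ⟨v, hv⟩ := isUnit_iff_exists_inv.mp hu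
    have hz : f ≠ 0 := by rintro rfl; rw [zero_mul] at hv; exact zero_ne_one hv
    have hz' : v ≠ 0 := by rintro rfl; rw [mul_zero] at hv; exact zero_ne_one hv
    have hd := totalDegree_mul_eq hz hz'
    rw [hv, totalDegree_one] at hd
    have hd0 : f.totalDegree = 0 := by omega
    refine ⟨coeff 0 f, ?_, eq_C_of_totalDegree_zero hd0⟩
    intro h0
    rw [eq_C_of_totalDegree_zero hd0, h0, map_zero] at hz
    exact hz rfl
  · rintro ⟨c, hc, rfl⟩
    exact hc.isUnit.map (C : F →+* MvPolynomial σ F)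

lemma irreducible_of_totalDegree_one {f : MvPolynomial σ F} (hf : f.totalDegree = 1) :
    Irreducible f := by
  have hf0 : f ≠ 0 := by intro h; rw [h, totalDegree_zero] at hf; omega
  constructor
  · intro hu
    obtain ⟨c, hc, rfl⟩ := isUnit_iff'.mp hu
    rw [totalDegree_C] at hf; omega
  · intro a b hab
    have ha : a ≠ 0 := by rintro rfl; rw [zero_mul] at hab; exact hf0 hab
    have hb : b ≠ 0 := by rintro rfl; rw [mul_zero] at hab; exact hf0 hab
    have hd := totalDegree_mul_eq ha hb
    rw [← hab, hf] at hd
    rcases Nat.eq_zero_or_pos a.totalDegree with h | h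
    · left
      refine isUnit_iff'.mpr ⟨coeff 0 a, ?_, eq_C_of_totalDegree_zero h⟩
      intro h0
      rw [eq_C_of_totalDegree_zero h, h0, map_zero] at ha
      exact ha rfl
    · right
      have hb0 : b.totalDegree = 0 := by omega
      refine isUnit_iff'.mpr ⟨coeff 0 b, ?_, eq_C_of_totalDegree_zero hb0⟩
      intro h0
      rw [eq_C_of_totalDegree_zero hb0, h0, map_zero] at hb
      exact hb rfl

end Y

lemma pow_sub_pow_eq_prod {A : Type*} [CommRing A] [IsDomain A] {ζ : A} {p : ℕ}
    (hζ : IsPrimitiveRoot ζ p) (hp : 0 < p) (h f : A) :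
    h ^ p - f ^ p = ∏ i ∈ Finset.range p, (h - ζ ^ i * f) := by
  have key := X_pow_sub_C_eq_prod hζ hp (rfl : f ^ p = f ^ p)
  have := congrArg (Polynomial.eval h) key
  simpa [Polynomial.eval_prod] using this



lemma dvd_classify {l m : MvPolynomial σ F} (hl : Prime l) (hm : Prime m) :
    ∀ (N a b : ℕ), a + b ≤ N → ∀ x : MvPolynomial σ F, x ∣ l ^ a * m ^ b →
      ∃ (c : F) (i j : ℕ), c ≠ 0 ∧ x = C c * l ^ i * m ^ j := by
  intro N
  induction N with
  | zero =>
    intro a b hab x hx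
    have ha : a = 0 := by omega
    have hb : b = 0 := by omega
    subst ha; subst hb
    simp only [pow_zero, one_mul] at hx
    obtain ⟨c, hc, rfl⟩ := isUnit_iff'.mp (isUnit_of_dvd_one hx)
    exact ⟨c, 0, 0, hc, by ring⟩
  | succ N ih =>
    intro a b hab x hx
    by_cases hu : IsUnit x
    · obtain ⟨c, hc, rfl⟩ := isUnit_iff'.mp hu
      exact ⟨c, 0, 0, hc, by ring⟩
    · have hlm0 : l ^ a * m ^ b ≠ 0 :=
        mul_ne_zero (pow_ne_zero _ hl.ne_zero) (pow_ne_zero _ hm.ne_zero)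
      have hx0 : x ≠ 0 := by rintro rfl; exact hlm0 (zero_dvd_iff.mp hx)
      obtain ⟨q, hqi, hqx⟩ := WfDvdMonoid.exists_irreducible_factor hu hx0
      have hq : Prime q := UniqueFactorizationMonoid.irreducible_iff_prime.mp hqi
      have hqd : q ∣ l ^ a * m ^ b := hqx.trans hx
      rcases hq.2.2 _ _ hqd with hql | hqm
      · have ha1 : 1 ≤ a := by
          rcases Nat.eq_zero_or_pos a with h0 | h; swap; · exact h
          rw [h0, pow_zero] at hql
          exact absurd (isUnit_of_dvd_one hql) hq.not_unit
        have hqdl : q ∣ l := hq.dvd_of_dvd_pow hql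
        have hassoc : Associated q l := hq.associated_of_dvd hl hqdl
        have hlx : l ∣ x := hassoc.symm.dvd.trans hqx
        obtain ⟨y, rfl⟩ := hlx
        have hy : y ∣ l ^ (a - 1) * m ^ b := by
          have heq : l * (l ^ (a - 1) * m ^ b) = l ^ a * m ^ b := by
            rw [← mul_assoc, ← pow_succ']
            congr 2
            omega
          have h2 : l * y ∣ l * (l ^ (a - 1) * m ^ b) := by rw [heq]; exact hx
          exact (mul_dvd_mul_iff_left hl.ne_zero).mp h2
        obtain ⟨c, i, j, hc, hy'⟩ := ih (a - 1) b (by omega) y hy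
        exact ⟨c, i + 1, j, hc, by rw [hy']; ring⟩
      · have hb1 : 1 ≤ b := by
          rcases Nat.eq_zero_or_pos b with h0 | h; swap; · exact h
          rw [h0, pow_zero] at hqm
          exact absurd (isUnit_of_dvd_one hqm) hq.not_unit
        have hqdm : q ∣ m := hq.dvd_of_dvd_pow hqm
        have hassoc : Associated q m := hq.associated_of_dvd hm hqdm
        have hmx : m ∣ x := hassoc.symm.dvd.trans hqx
        obtain ⟨y, rfl⟩ := hmx
        have hy : y ∣ l ^ a * m ^ (b - 1) := by
          have heq : m * (l ^ a * m ^ (b - 1)) = l ^ a * m ^ b := by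
            rw [mul_comm (l ^ a) (m ^ (b-1)), ← mul_assoc, ← pow_succ',
              mul_comm _ (l ^ a)]
            congr 2
            omega
          have h2 : m * y ∣ m * (l ^ a * m ^ (b - 1)) := by rw [heq]; exact hx
          exact (mul_dvd_mul_iff_left hm.ne_zero).mp h2
        obtain ⟨c, i, j, hc, hy'⟩ := ih a (b - 1) (by omega) y hy
        exact ⟨c, i, j + 1, hc, by rw [hy']; ring⟩


/-- Key lemma: an equation `h^p - f^p = t·g^p` with `g` irreducible of top degree
forces `f` proportional to `g`. -/
lemma key_irred {d p : ℕ} {ζ : F} (hζ : IsPrimitiveRoot ζ p) (hd : 1 ≤ d) (hp : 2 ≤ p)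
    {f g h : MvPolynomial σ F} {t : F}
    (ht : t ≠ 0) (hf : f ≠ 0)
    (hdf : f.totalDegree ≤ d) (hdh : h.totalDegree ≤ d) (hdg : g.totalDegree = d)
    (hgi : Irreducible g)
    (hnp : ∀ c : F, f ≠ C c * g)
    (heq : h ^ p - f ^ p = C t * g ^ p) : False := by
  have hg0 : g ≠ 0 := hgi.ne_zero
  have hgp : Prime g := UniqueFactorizationMonoid.irreducible_iff_prime.mp hgi
  have hζR : IsPrimitiveRoot (C ζ : MvPolynomial σ F) p :=
    hζ.map_of_injective (f := (C : F →+* MvPolynomial σ F)) (C_injective σ F)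
  set G : ℕ → MvPolynomial σ F := fun i => h - (C ζ) ^ i * f with hG
  have hprodeq : ∏ i ∈ Finset.range p, G i = C t * g ^ p := by
    rw [← pow_sub_pow_eq_prod hζR (by omega) h f, heq]
  have hrhs0 : C t * g ^ p ≠ 0 :=
    mul_ne_zero (fun hh => ht (by simpa using hh)) (pow_ne_zero _ hg0)
  have hGne : ∀ i ∈ Finset.range p, G i ≠ 0 := by
    intro i hi
    have := hprodeq ▸ hrhs0
    exact fun h0 => this (Finset.prod_eq_zero hi h0)
  -- each factor is (const) * g^(k i)
  have hfac : ∀ i : ℕ, ∃ (c : F) (k : ℕ), i < p → (c ≠ 0 ∧ G i = C c * g ^ k) := by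
    intro i
    by_cases hi : i < p
    · have hdvd : G i ∣ C t * g ^ p :=
        hprodeq ▸ Finset.dvd_prod_of_mem G (Finset.mem_range.mpr hi)
      have hdvd' : G i ∣ g ^ p := by
        obtain ⟨w, hw⟩ := hdvd
        refine ⟨C t⁻¹ * w, ?_⟩
        have h2 : C (t⁻¹ * t) * g ^ p = (C t⁻¹ : MvPolynomial σ F) * (C t * g ^ p) := by
          rw [map_mul]; ring
        rw [inv_mul_cancel₀ ht, map_one, one_mul] at h2
        rw [h2, hw]; ring
      obtain ⟨k, hk, hassoc⟩ := (dvd_prime_pow hgp p).mp hdvd'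
      obtain ⟨u, hu⟩ := hassoc.symm
      obtain ⟨c, hc, hcu⟩ := isUnit_iff'.mp u.isUnit
      refine ⟨c, k, fun _ => ⟨hc, ?_⟩⟩
      rw [← hu, hcu]; ring
    · exact ⟨1, 0, fun h => absurd h hi⟩
  choose cf kf hcf using hfac
  -- degrees of the factors
  have hdeg : ∀ i, i < p → (G i).totalDegree = kf i * d := by
    intro i hi
    obtain ⟨hc, hGi⟩ := hcf i hi
    rw [hGi, totalDegree_mul_eq (fun hh => hc (by simpa using hh)) (pow_ne_zero _ hg0),
      totalDegree_C, totalDegree_pow_eq hg0, hdg, zero_add]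
  have hle : ∀ i, i < p → kf i ≤ 1 := by
    intro i hi
    have h1 : (G i).totalDegree ≤ d := by
      rw [hG]
      refine le_trans (totalDegree_sub h _) ?_
      simp only [max_le_iff]
      constructor
      · exact hdh
      · calc ((C ζ) ^ i * f).totalDegree ≤ ((C ζ) ^ i).totalDegree + f.totalDegree :=
            totalDegree_mul _ _
          _ ≤ d := by
            rw [← map_pow, totalDegree_C, zero_add]; exact hdf
    rw [hdeg i hi] at h1
    by_contra hcon
    push_neg at hcon
    nlinarith
  -- sum of degrees
  have hsum : ∑ i ∈ Finset.range p, kf i * d = p * d := by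
    have h1 := totalDegree_prod_eq (Finset.range p) G hGne
    rw [hprodeq, totalDegree_mul_eq (fun hh => ht (by simpa using hh)) (pow_ne_zero _ hg0),
      totalDegree_C, totalDegree_pow_eq hg0, hdg, zero_add] at h1
    rw [h1]
    apply Finset.sum_congr rfl
    intro i hi
    exact (hdeg i (Finset.mem_range.mp hi)).symm
  have hall : ∀ i, i < p → kf i = 1 := by
    by_contra hcon
    push_neg at hcon
    obtain ⟨j, hj, hkj⟩ := hcon
    have hkj0 : kf j = 0 := by have := hle j hj; omega
    have : ∑ i ∈ Finset.range p, kf i * d < ∑ i ∈ Finset.range p, d := by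
      apply Finset.sum_lt_sum
      · intro i hi
        have := hle i (Finset.mem_range.mp hi)
        nlinarith
      · exact ⟨j, Finset.mem_range.mpr hj, by rw [hkj0]; omega⟩
    rw [hsum, Finset.sum_const, Finset.card_range, smul_eq_mul] at this
    omega
  -- now compare factors 0 and 1
  obtain ⟨hc0, hG0⟩ := hcf 0 (by omega)
  obtain ⟨hc1, hG1⟩ := hcf 1 (by omega)
  rw [hall 0 (by omega)] at hG0
  rw [hall 1 (by omega)] at hG1
  have hζ1 : ζ ≠ 1 := hζ.ne_one (by omega)
  have hdiff : C (ζ - 1) * f = C (cf 0 - cf 1) * g := by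
    have : G 0 - G 1 = C (ζ - 1) * f := by
      rw [hG]
      simp only [pow_zero, pow_one, one_mul, map_sub, map_one]
      ring
    rw [← this, hG0, hG1, pow_one]
    rw [map_sub]
    ring
  apply hnp ((cf 0 - cf 1) / (ζ - 1))
  have hz : (ζ - 1) ≠ 0 := sub_ne_zero.mpr hζ1
  have := congrArg (fun x => C (ζ - 1)⁻¹ * x) hdiff
  rw [← mul_assoc, ← map_mul, inv_mul_cancel₀ hz, map_one, one_mul] at this
  rw [this, ← mul_assoc, ← map_mul, div_eq_inv_mul]


lemma shared_case {p : ℕ} {ζ : ℂ} (hζ : IsPrimitiveRoot ζ p) (hp : 2 ≤ p)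
    {ψ₁ ψ₂ l m : MvPolynomial σ ℂ}
    (hl : Prime l) (hdl : l.totalDegree = 1) (hdm : m.totalDegree = 1)
    (hψ₂ : ψ₂ = l * m) (hψ₁0 : ψ₁ ≠ 0) (hd₁ : ψ₁.totalDegree = 2)
    (hne : ∀ c : ℂ, ψ₁ ≠ C c * ψ₂)
    (hldvd : l ∣ ψ₁)
    (H : ∃ ψ : MvPolynomial σ ℂ, ψ.IsHomogeneous 2 ∧ ψ₁ ^ p + ψ₂ ^ p = ψ ^ p) : False := by
  obtain ⟨b, hb⟩ := hldvd
  have hl0 : l ≠ 0 := hl.ne_zero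
  have hb0 : b ≠ 0 := by rintro rfl; rw [mul_zero] at hb; exact hψ₁0 hb
  have hdb : b.totalDegree = 1 := by
    have h3 := totalDegree_mul_eq hl0 hb0
    rw [← hb, hd₁, hdl] at h3; omega
  have hbm : ∀ c : ℂ, b ≠ C c * m := by
    intro c hc
    apply hne c
    rw [hb, hc, hψ₂]; ring
  obtain ⟨ψ, hψhom, hψeq⟩ := H
  have heq2 : ψ ^ p = l ^ p * (b ^ p + m ^ p) := by
    rw [← hψeq, hb, hψ₂]; ring
  have hψ0 : ψ ≠ 0 := by
    rintro rfl
    rw [zero_pow (by omega : p ≠ 0)] at heq2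
    have hbm0 : b ^ p + m ^ p = 0 := by
      rcases mul_eq_zero.mp heq2.symm with h | h
      · exact absurd h (pow_ne_zero _ hl0)
      · exact h
    obtain ⟨η, hη⟩ := IsAlgClosed.exists_pow_nat_eq (-1 : ℂ) (n := p) (by omega)
    have hfac : ∏ i ∈ Finset.range p, (b - (C ζ) ^ i * (C η * m)) = 0 := by
      rw [← pow_sub_pow_eq_prod
        (hζ.map_of_injective (f := (C : ℂ →+* MvPolynomial σ ℂ)) (C_injective σ ℂ)) (by omega),
        mul_pow, ← map_pow, hη, map_neg, map_one, neg_one_mul, sub_neg_eq_add]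
      exact hbm0
    obtain ⟨i, hi, h0⟩ := Finset.prod_eq_zero_iff.mp hfac
    apply hbm (ζ ^ i * η)
    rw [map_mul, map_pow]
    have h1 := sub_eq_zero.mp h0
    rw [h1]; ring
  have hdψ : ψ.totalDegree = 2 := hψhom.totalDegree hψ0
  have hlψ : l ∣ ψ := by
    apply hl.dvd_of_dvd_pow (n := p)
    rw [heq2]
    exact Dvd.dvd.mul_right (dvd_pow_self l (by omega)) _
  obtain ⟨u, hu⟩ := hlψ
  have hu0 : u ≠ 0 := by rintro rfl; rw [mul_zero] at hu; exact hψ0 hu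
  have hdu : u.totalDegree = 1 := by
    have h3 := totalDegree_mul_eq hl0 hu0
    rw [← hu, hdψ, hdl] at h3; omega
  have hupow : u ^ p - b ^ p = C (1 : ℂ) * m ^ p := by
    have h4 : l ^ p * u ^ p = l ^ p * (b ^ p + m ^ p) := by rw [← mul_pow, ← hu, heq2]
    have h5 := mul_left_cancel₀ (pow_ne_zero p hl0) h4
    rw [map_one, one_mul, h5]; ring
  exact key_irred hζ le_rfl hp one_ne_zero hb0 (le_of_eq hdb) (le_of_eq hdu) hdm
    (irreducible_of_totalDegree_one hdm) hbm hupow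

lemma classify_factor {l m x : MvPolynomial σ ℂ} (hl : Prime l) (hm : Prime m)
    (hdl : l.totalDegree = 1) (hdm : m.totalDegree = 1) {t : ℂ} (ht : t ≠ 0) {p : ℕ}
    (hx2 : x.totalDegree = 2) (hxd : x ∣ C t * (l ^ p * m ^ p)) :
    ∃ (c : ℂ) (i j : ℕ), c ≠ 0 ∧ i + j = 2 ∧ x = C c * l ^ i * m ^ j := by
  have hxd' : x ∣ l ^ p * m ^ p := by
    obtain ⟨w, hw⟩ := hxd
    refine ⟨C t⁻¹ * w, ?_⟩
    have h2 : C (t⁻¹ * t) * (l ^ p * m ^ p) = (C t⁻¹ : MvPolynomial σ ℂ) * (C t * (l ^ p * m ^ p)) := by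
      rw [map_mul]; ring
    rw [inv_mul_cancel₀ ht, map_one, one_mul] at h2
    rw [h2, hw]; ring
  obtain ⟨c, i, j, hc, hx⟩ := dvd_classify hl hm (p + p) p p le_rfl x hxd'
  refine ⟨c, i, j, hc, ?_, hx⟩
  have hC : (C c : MvPolynomial σ ℂ) ≠ 0 := fun hh => hc (by simpa using hh)
  have hd := hx ▸ hx2
  rw [totalDegree_mul_eq (mul_ne_zero hC (pow_ne_zero _ hl.ne_zero)) (pow_ne_zero _ hm.ne_zero),
    totalDegree_mul_eq hC (pow_ne_zero _ hl.ne_zero), totalDegree_C,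
    totalDegree_pow_eq hl.ne_zero, totalDegree_pow_eq hm.ne_zero, hdl, hdm] at hd
  omega

lemma pair_types {l m F G : MvPolynomial σ ℂ} (hl : Prime l) (hm : Prime m)
    {c c' : ℂ} {a b a' b' : ℕ}
    (hF : F = C c * l ^ a * m ^ b) (hG : G = C c' * l ^ a' * m ^ b')
    (hab : a + b = 2) (hab' : a' + b' = 2)
    (hld : ¬ l ∣ (F - G)) (hmd : ¬ m ∣ (F - G)) :
    (a = 2 ∧ a' = 0) ∨ (a = 0 ∧ a' = 2) := by
  have keyl : ∀ (y : MvPolynomial σ ℂ) (e : ℂ) (i j : ℕ), y = C e * l ^ i * m ^ j → 1 ≤ i →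
      l ∣ y := by
    intro y e i j hy hi
    rw [hy]
    exact ((dvd_pow_self l (by omega : i ≠ 0)).mul_left (C e)).mul_right _
  have keym : ∀ (y : MvPolynomial σ ℂ) (e : ℂ) (i j : ℕ), y = C e * l ^ i * m ^ j → 1 ≤ j →
      m ∣ y := by
    intro y e i j hy hj
    rw [hy]
    exact (dvd_pow_self m (by omega : j ≠ 0)).mul_left _
  have h1 : ¬ (1 ≤ a ∧ 1 ≤ a') := by
    rintro ⟨ha, ha'⟩
    exact hld (dvd_sub (keyl F c a b hF ha) (keyl G c' a' b' hG ha'))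
  have h2 : ¬ (1 ≤ b ∧ 1 ≤ b') := by
    rintro ⟨hb, hb'⟩
    exact hmd (dvd_sub (keym F c a b hF hb) (keym G c' a' b' hG hb'))
  omega

lemma endgame {l m ψ₁ ψ₂ A B : MvPolynomial σ ℂ} {t s : ℂ}
    (hl : Prime l) (hm : Prime m) (hdl : l.totalDegree = 1) (hdm : m.totalDegree = 1)
    (hψ₂ : ψ₂ = l * m) (hψ₁0 : ψ₁ ≠ 0) (hmψ : ¬ m ∣ ψ₁)
    (hts : t ≠ s)
    (hA : A ^ 2 - ψ₁ ^ 2 = C t * ψ₂ ^ 2) (hB : B ^ 2 - ψ₁ ^ 2 = C s * ψ₂ ^ 2)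
    {c d c' d' : ℂ}
    (hA1 : A - ψ₁ = C c * l ^ 2) (hA2 : A + ψ₁ = C d * m ^ 2)
    (hB1 : B - ψ₁ = C c' * l ^ 2) (hB2 : B + ψ₁ = C d' * m ^ 2) : False := by
  have hψ₂0 : ψ₂ ≠ 0 := by
    rw [hψ₂]; exact mul_ne_zero hl.ne_zero hm.ne_zero
  by_cases hcc : c = c'
  · have hAB : A = B := by
      have h1 : A - B = C c * l ^ 2 - C c' * l ^ 2 := by
        rw [← hA1, ← hB1]; ring
      rw [hcc, sub_self] at h1
      exact sub_eq_zero.mp h1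
    have h2 : C (t - s) * ψ₂ ^ 2 = 0 := by
      have h3 : C t * ψ₂ ^ 2 = C s * ψ₂ ^ 2 := hA.symm.trans (hAB ▸ hB)
      rw [map_sub, sub_mul, h3, sub_self]
    rcases mul_eq_zero.mp h2 with h | h
    · rw [C_eq_zero] at h
      exact hts (sub_eq_zero.mp h)
    · exact pow_ne_zero 2 hψ₂0 h
  · have hlm : C (c - c') * l ^ 2 = C (d - d') * m ^ 2 := by
      rw [map_sub, map_sub]
      linear_combination hB1 - hA1 + hA2 - hB2
    have hml : m ∣ l ^ 2 := by
      have h3 : m ∣ C (c - c') * l ^ 2 := by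
        rw [hlm]
        exact (dvd_pow_self m two_ne_zero).mul_left _
      obtain ⟨w, hw⟩ := h3
      refine ⟨C (c - c')⁻¹ * w, ?_⟩
      have hcc' : (c - c') ≠ 0 := sub_ne_zero.mpr hcc
      have h4 : C ((c - c')⁻¹ * (c - c')) * l ^ 2
          = (C (c - c')⁻¹ : MvPolynomial σ ℂ) * (C (c - c') * l ^ 2) := by
        rw [map_mul]; ring
      rw [inv_mul_cancel₀ hcc', map_one, one_mul] at h4
      rw [h4, hw]; ring
    have hmll : m ∣ l := hm.dvd_of_dvd_pow hml
    obtain ⟨w, hw⟩ := hmll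
    have hw0 : w ≠ 0 := by rintro rfl; rw [mul_zero] at hw; exact hl.ne_zero hw
    have hdw : w.totalDegree = 0 := by
      have h3 := totalDegree_mul_eq hm.ne_zero hw0
      rw [← hw, hdl, hdm] at h3; omega
    set w₀ := coeff 0 w with hw₀
    have hlw : l = m * C w₀ := by
      rw [hw, ← eq_C_of_totalDegree_zero hdw]
    have h2ψ : ψ₁ + ψ₁ = (C d - C c * C w₀ ^ 2) * m ^ 2 := by
      linear_combination hA2 - hA1 - (C c * (l + m * C w₀)) * hlw
    have hdvd2 : m ∣ C (2 : ℂ) * ψ₁ := by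
      have hC2 : (C (2 : ℂ) : MvPolynomial σ ℂ) = 2 := map_ofNat _ 2
      have h5 : C (2 : ℂ) * ψ₁ = (C d - C c * C w₀ ^ 2) * m ^ 2 := by
        rw [hC2, two_mul]; exact h2ψ
      rw [h5]
      exact (dvd_pow_self m two_ne_zero).mul_left _
    rcases hm.2.2 _ _ hdvd2 with h | h
    · exact hm.not_unit (isUnit_of_dvd_unit h ((two_ne_zero (α := ℂ)).isUnit.map
        (C : ℂ →+* MvPolynomial σ ℂ)))
    · exact hmψ h


end NotAllPthAux


open NotAllPthAux in
/-- If `ψ₁, ψ₂` are linearly independent quadratic forms and `p ≥ 2`, then not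
every linear combination `λψ₁^p + μψ₂^p` is a `p`-th power of a quadratic form. -/
theorem not_all_pth_powers (n : ℕ) (hn : 2 ≤ n) (p : ℕ) (hp : 2 ≤ p)
    (ψ₁ ψ₂ : MvPolynomial (Fin n) ℂ)
    (h₁ : ψ₁.IsHomogeneous 2) (h₂ : ψ₂.IsHomogeneous 2)
    (hli : LinearIndependent ℂ ![ψ₁, ψ₂]) :
    ¬ ∀ lam mu : ℂ, ∃ ψ : MvPolynomial (Fin n) ℂ,
        ψ.IsHomogeneous 2 ∧ lam • ψ₁ ^ p + mu • ψ₂ ^ p = ψ ^ p := by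
  intro H
  rw [linearIndependent_fin2] at hli
  obtain ⟨h20, hsm⟩ := hli
  simp only [Matrix.cons_val_one, Matrix.head_cons, Matrix.cons_val_zero] at h20 hsm
  have hψ₂0 : ψ₂ ≠ 0 := h20
  have hne : ∀ c : ℂ, ψ₁ ≠ C c * ψ₂ := by
    intro c hc; exact hsm c (by rw [smul_eq_C_mul]; exact hc.symm)
  have hψ₁0 : ψ₁ ≠ 0 := by
    intro h; exact hne 0 (by rw [h, map_zero, zero_mul])
  have hne' : ∀ c : ℂ, ψ₂ ≠ C c * ψ₁ := by
    intro c hc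
    have hc0 : c ≠ 0 := by rintro rfl; rw [map_zero, zero_mul] at hc; exact hψ₂0 hc
    apply hne c⁻¹
    rw [hc, ← mul_assoc, ← map_mul, inv_mul_cancel₀ hc0, map_one, one_mul]
  have hd₁ : ψ₁.totalDegree = 2 := h₁.totalDegree hψ₁0
  have hd₂ : ψ₂.totalDegree = 2 := h₂.totalDegree hψ₂0
  set ζ : ℂ := Complex.exp (2 * Real.pi * Complex.I / p) with hζdef
  have hζ : IsPrimitiveRoot ζ p := Complex.isPrimitiveRoot_exp p (by omega)
  have getH : ∀ t : ℂ, ∃ ψ : MvPolynomial (Fin n) ℂ, ψ.IsHomogeneous 2 ∧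
      ψ ^ p - ψ₁ ^ p = C t * ψ₂ ^ p := by
    intro t
    obtain ⟨ψ, hhom, heq⟩ := H 1 t
    rw [one_smul, smul_eq_C_mul] at heq
    exact ⟨ψ, hhom, by linear_combination -heq⟩
  by_cases hirr2 : Irreducible ψ₂
  · obtain ⟨ψ, hhom, heq⟩ := getH 1
    exact key_irred hζ (by omega) hp one_ne_zero hψ₁0 hd₁.le
      hhom.totalDegree_le hd₂ hirr2 hne heq
  by_cases hirr1 : Irreducible ψ₁
  · obtain ⟨ψ, hhom, heq⟩ := getH 1
    have heq' : ψ ^ p - ψ₂ ^ p = C (1 : ℂ) * ψ₁ ^ p := by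
      rw [map_one] at heq ⊢; linear_combination heq
    exact key_irred hζ (by omega) hp one_ne_zero hψ₂0 hd₂.le
      hhom.totalDegree_le hd₁ hirr1 hne' heq'
  -- split ψ₂ into two linear factors
  obtain ⟨l, m, hl, hm, hlm, hdl, hdm⟩ :
      ∃ l m : MvPolynomial (Fin n) ℂ, Prime l ∧ Prime m ∧ ψ₂ = l * m ∧
        l.totalDegree = 1 ∧ m.totalDegree = 1 := by
    have hnu : ¬IsUnit ψ₂ := by
      intro hu
      obtain ⟨c, hc, hcc⟩ := isUnit_iff'.mp hu
      have h5 := hd₂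
      rw [hcc, totalDegree_C] at h5; omega
    rw [irreducible_iff] at hirr2
    push_neg at hirr2
    obtain ⟨a, b, hab, hna, hnb⟩ := hirr2 hnu
    have ha0 : a ≠ 0 := by rintro rfl; rw [zero_mul] at hab; exact hψ₂0 hab
    have hb0 : b ≠ 0 := by rintro rfl; rw [mul_zero] at hab; exact hψ₂0 hab
    have hd := totalDegree_mul_eq ha0 hb0
    rw [← hab, hd₂] at hd
    have hga : 1 ≤ a.totalDegree := by
      by_contra hcon
      apply hna
      have h0 : a.totalDegree = 0 := by omega
      refine isUnit_iff'.mpr ⟨coeff 0 a, ?_, eq_C_of_totalDegree_zero h0⟩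
      intro hc0; apply ha0
      rw [eq_C_of_totalDegree_zero h0, hc0, map_zero]
    have hgb : 1 ≤ b.totalDegree := by
      by_contra hcon
      apply hnb
      have h0 : b.totalDegree = 0 := by omega
      refine isUnit_iff'.mpr ⟨coeff 0 b, ?_, eq_C_of_totalDegree_zero h0⟩
      intro hc0; apply hb0
      rw [eq_C_of_totalDegree_zero h0, hc0, map_zero]
    have hda : a.totalDegree = 1 := by omega
    have hdb : b.totalDegree = 1 := by omega
    exact ⟨a, b,
      UniqueFactorizationMonoid.irreducible_iff_prime.mp (irreducible_of_totalDegree_one hda),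
      UniqueFactorizationMonoid.irreducible_iff_prime.mp (irreducible_of_totalDegree_one hdb),
      hab, hda, hdb⟩
  by_cases hld : l ∣ ψ₁
  · obtain ⟨ψ, hhom, heq⟩ := H 1 1
    exact shared_case hζ hp hl hdl hdm hlm hψ₁0 hd₁ hne hld
      ⟨ψ, hhom, by simpa using heq⟩
  by_cases hmd : m ∣ ψ₁
  · obtain ⟨ψ, hhom, heq⟩ := H 1 1
    exact shared_case hζ hp hm hdm hdl (show ψ₂ = m * l by rw [hlm, mul_comm]) hψ₁0 hd₁ hne hmd
      ⟨ψ, hhom, by simpa using heq⟩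
  -- coprime case
  have hζR : IsPrimitiveRoot (C ζ : MvPolynomial (Fin n) ℂ) p :=
    hζ.map_of_injective (C_injective _ ℂ)
  have main : ∀ t : ℂ, t ≠ 0 → ∃ ψ : MvPolynomial (Fin n) ℂ, ψ.IsHomogeneous 2 ∧
      (ψ ^ p - ψ₁ ^ p = C t * ψ₂ ^ p) ∧
      ∀ i < p, ∃ (c : ℂ) (ai : ℕ), c ≠ 0 ∧ ai ≤ 2 ∧
        ψ - (C ζ) ^ i * ψ₁ = C c * l ^ ai * m ^ (2 - ai) := by
    intro t ht
    obtain ⟨ψ, hhom, heq⟩ := getH t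
    refine ⟨ψ, hhom, heq, ?_⟩
    intro i hi
    have hprod : ∏ k ∈ Finset.range p, (ψ - (C ζ) ^ k * ψ₁) = C t * (l ^ p * m ^ p) := by
      rw [← pow_sub_pow_eq_prod hζR (by omega), heq, hlm, mul_pow]
    have hCt : (C t : MvPolynomial (Fin n) ℂ) ≠ 0 := fun hh => ht (by
      rwa [C_eq_zero] at hh)
    have hrhs0 : C t * (l ^ p * m ^ p) ≠ 0 :=
      mul_ne_zero hCt (mul_ne_zero (pow_ne_zero _ hl.ne_zero) (pow_ne_zero _ hm.ne_zero))
    have hF0 : ψ - (C ζ) ^ i * ψ₁ ≠ 0 := by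
      intro h0
      exact (hprod ▸ hrhs0) (Finset.prod_eq_zero (Finset.mem_range.mpr hi) h0)
    have hFhom : (ψ - (C ζ) ^ i * ψ₁).IsHomogeneous 2 := by
      apply hhom.sub
      have h6 := h₁.C_mul (ζ ^ i)
      rwa [map_pow] at h6
    have hFdeg : (ψ - (C ζ) ^ i * ψ₁).totalDegree = 2 := hFhom.totalDegree hF0
    have hFdvd : (ψ - (C ζ) ^ i * ψ₁) ∣ C t * (l ^ p * m ^ p) := by
      rw [← hprod]
      exact Finset.dvd_prod_of_mem _ (Finset.mem_range.mpr hi)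
    obtain ⟨c, ai, bi, hc, habi, hfac⟩ := classify_factor hl hm hdl hdm ht hFdeg hFdvd
    refine ⟨c, ai, hc, by omega, ?_⟩
    rw [hfac, show 2 - ai = bi by omega]
  have pairlem : ∀ (ψ : MvPolynomial (Fin n) ℂ), ∀ i j : ℕ, i < p → j < p → i ≠ j →
      ∀ (c c' : ℂ) (a a' : ℕ), c ≠ 0 → c' ≠ 0 → a ≤ 2 → a' ≤ 2 →
      ψ - (C ζ) ^ i * ψ₁ = C c * l ^ a * m ^ (2 - a) →
      ψ - (C ζ) ^ j * ψ₁ = C c' * l ^ a' * m ^ (2 - a') →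
      (a = 2 ∧ a' = 0) ∨ (a = 0 ∧ a' = 2) := by
    intro ψ i j hi hj hij c c' a a' hc hc' ha ha' hFi hFj
    have hdiff : (ψ - (C ζ) ^ i * ψ₁) - (ψ - (C ζ) ^ j * ψ₁) = C (ζ ^ j - ζ ^ i) * ψ₁ := by
      rw [map_sub, map_pow, map_pow]; ring
    have hzz : (ζ ^ j - ζ ^ i) ≠ 0 :=
      sub_ne_zero.mpr fun hh => hij ((hζ.pow_inj hj hi hh).symm)
    have hdvd_psi : ∀ y : MvPolynomial (Fin n) ℂ,
        y ∣ (ψ - (C ζ) ^ i * ψ₁) - (ψ - (C ζ) ^ j * ψ₁) → y ∣ ψ₁ := by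
      intro y hy
      rw [hdiff] at hy
      obtain ⟨w, hw⟩ := hy
      refine ⟨C (ζ ^ j - ζ ^ i)⁻¹ * w, ?_⟩
      have h4 : C ((ζ ^ j - ζ ^ i)⁻¹ * (ζ ^ j - ζ ^ i)) * ψ₁
          = (C (ζ ^ j - ζ ^ i)⁻¹ : MvPolynomial (Fin n) ℂ) * (C (ζ ^ j - ζ ^ i) * ψ₁) := by
        rw [map_mul]; ring
      rw [inv_mul_cancel₀ hzz, map_one, one_mul] at h4
      rw [h4, hw]; ring
    exact pair_types hl hm hFi hFj (by omega) (by omega)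
      (fun hdd => hld (hdvd_psi l hdd)) (fun hdd => hmd (hdvd_psi m hdd))
  rcases Nat.lt_or_ge p 3 with hp3 | hp3
  · -- p = 2
    have hp2 : p = 2 := by omega
    subst hp2
    have hζ2 : ζ = -1 := by
      have h1 : ζ ^ 2 = 1 := hζ.pow_eq_one
      have h2 : ζ ≠ 1 := hζ.ne_one (by omega)
      have h3 : (ζ - 1) * (ζ + 1) = 0 := by linear_combination h1
      rcases mul_eq_zero.mp h3 with h | h
      · exact absurd (sub_eq_zero.mp h) h2
      · exact eq_neg_of_add_eq_zero_left h
    have orient : ∀ t : ℂ, t ≠ 0 → ∃ A : MvPolynomial (Fin n) ℂ,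
        (A ^ 2 - ψ₁ ^ 2 = C t * ψ₂ ^ 2) ∧
        ((∃ c d : ℂ, A - ψ₁ = C c * l ^ 2 ∧ A + ψ₁ = C d * m ^ 2) ∨
         (∃ c d : ℂ, A - ψ₁ = C c * m ^ 2 ∧ A + ψ₁ = C d * l ^ 2)) := by
      intro t ht
      obtain ⟨ψ, hhom, heq, hfacs⟩ := main t ht
      obtain ⟨c0, a0, hc0, ha0, hf0⟩ := hfacs 0 (by omega)
      obtain ⟨c1, a1, hc1, ha1, hf1⟩ := hfacs 1 (by omega)
      have hor := pairlem ψ 0 1 (by omega) (by omega) (by omega) c0 c1 a0 a1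
        hc0 hc1 ha0 ha1 hf0 hf1
      rw [pow_zero, one_mul] at hf0
      rw [pow_one, hζ2, map_neg, map_one, neg_one_mul, sub_neg_eq_add] at hf1
      refine ⟨ψ, heq, ?_⟩
      rcases hor with ⟨h20', h10'⟩ | ⟨h00', h12'⟩
      · left
        rw [h20'] at hf0
        rw [h10'] at hf1
        norm_num at hf0 hf1
        exact ⟨c0, c1, hf0, hf1⟩
      · right
        rw [h00'] at hf0
        rw [h12'] at hf1
        norm_num at hf0 hf1
        exact ⟨c0, c1, hf0, hf1⟩
    obtain ⟨A1, hA1eq, hA1or⟩ := orient 1 one_ne_zero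
    obtain ⟨A2, hA2eq, hA2or⟩ := orient 2 two_ne_zero
    obtain ⟨A3, hA3eq, hA3or⟩ := orient 3 three_ne_zero
    have hlm' : ψ₂ = m * l := by rw [hlm, mul_comm]
    rcases hA1or with h1 | h1 <;> rcases hA2or with h2 | h2 <;> rcases hA3or with h3 | h3
    · obtain ⟨c, d, e1, e2⟩ := h1; obtain ⟨c', d', e3, e4⟩ := h2
      exact endgame hl hm hdl hdm hlm hψ₁0 hmd (by norm_num) hA1eq hA2eq e1 e2 e3 e4
    · obtain ⟨c, d, e1, e2⟩ := h1; obtain ⟨c', d', e3, e4⟩ := h2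
      exact endgame hl hm hdl hdm hlm hψ₁0 hmd (by norm_num) hA1eq hA2eq e1 e2 e3 e4
    · obtain ⟨c, d, e1, e2⟩ := h1; obtain ⟨c', d', e3, e4⟩ := h3
      exact endgame hl hm hdl hdm hlm hψ₁0 hmd (by norm_num) hA1eq hA3eq e1 e2 e3 e4
    · obtain ⟨c, d, e1, e2⟩ := h2; obtain ⟨c', d', e3, e4⟩ := h3
      exact endgame hm hl hdm hdl hlm' hψ₁0 hld (by norm_num) hA2eq hA3eq e1 e2 e3 e4
    · obtain ⟨c, d, e1, e2⟩ := h2; obtain ⟨c', d', e3, e4⟩ := h3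
      exact endgame hl hm hdl hdm hlm hψ₁0 hmd (by norm_num) hA2eq hA3eq e1 e2 e3 e4
    · obtain ⟨c, d, e1, e2⟩ := h1; obtain ⟨c', d', e3, e4⟩ := h3
      exact endgame hm hl hdm hdl hlm' hψ₁0 hld (by norm_num) hA1eq hA3eq e1 e2 e3 e4
    · obtain ⟨c, d, e1, e2⟩ := h1; obtain ⟨c', d', e3, e4⟩ := h2
      exact endgame hm hl hdm hdl hlm' hψ₁0 hld (by norm_num) hA1eq hA2eq e1 e2 e3 e4
    · obtain ⟨c, d, e1, e2⟩ := h1; obtain ⟨c', d', e3, e4⟩ := h2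
      exact endgame hm hl hdm hdl hlm' hψ₁0 hld (by norm_num) hA1eq hA2eq e1 e2 e3 e4
  · -- p ≥ 3
    obtain ⟨ψ, hhom, heq, hfacs⟩ := main 1 one_ne_zero
    obtain ⟨c0, a0, hc0, ha0, hf0⟩ := hfacs 0 (by omega)
    obtain ⟨c1, a1, hc1, ha1, hf1⟩ := hfacs 1 (by omega)
    obtain ⟨c2, a2, hc2, ha2, hf2⟩ := hfacs 2 (by omega)
    have h01 := pairlem ψ 0 1 (by omega) (by omega) (by omega) c0 c1 a0 a1 hc0 hc1 ha0 ha1 hf0 hf1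
    have h02 := pairlem ψ 0 2 (by omega) (by omega) (by omega) c0 c2 a0 a2 hc0 hc2 ha0 ha2 hf0 hf2
    have h12 := pairlem ψ 1 2 (by omega) (by omega) (by omega) c1 c2 a1 a2 hc1 hc2 ha1 ha2 hf1 hf2
    omega
end

section
/- Let n ≥ 2, and suppose q = X₀² + ⋯ + X_{n−2}² + X_{n−1}(α₀X₀ + ⋯ + α_{n−1}X_{n−1}) is a quadratic form on ℂⁿ. Then q has rank n if and only if α₀² + ⋯ + α_{n−2}² − 4α_{n−1} ≠ 0. -/
lemma rank_eq_card_iff_det_ne_zero {n : ℕ} (A : Matrix (Fin n) (Fin n) ℂ) :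
    A.rank = n ↔ A.det ≠ 0 := by
  rw [← isUnit_iff_ne_zero, ← Matrix.isUnit_iff_isUnit_det]
  constructor
  · intro h
    rw [← Matrix.mulVec_surjective_iff_isUnit]
    have hrange : LinearMap.range A.mulVecLin = ⊤ := by
      apply Submodule.eq_top_of_finrank_eq
      rw [← Matrix.rank, h]
      simp
    intro y
    exact (LinearMap.range_eq_top.mp hrange) y
  · intro h
    simpa using A.rank_of_isUnit h

/-- The quadratic form `X₀² + ⋯ + X_{n−2}² + X_{n−1}(α₀X₀ + ⋯ + α_{n−1}X_{n−1})`
on `ℂⁿ` has rank `n` iff `α₀² + ⋯ + α_{n−2}² − 4α_{n−1} ≠ 0`. -/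
theorem rank_n_iff (n : ℕ) (hn : 2 ≤ n) (α : Fin n → ℂ) :
    (Matrix.of (fun i j : Fin n =>
        (if i = j ∧ (i : ℕ) < n - 1 then (1 : ℂ) else 0)
        + (if (i : ℕ) = n - 1 then α j / 2 else 0)
        + (if (j : ℕ) = n - 1 then α i / 2 else 0))).rank = n
    ↔ (∑ i ∈ Finset.univ.filter (fun i : Fin n => (i : ℕ) < n - 1), (α i)^2)
        - 4 * α ⟨n - 1, by omega⟩ ≠ 0 := by
  obtain ⟨m, rfl⟩ : ∃ m, n = m + 1 := ⟨n - 1, by omega⟩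
  simp only [Nat.add_sub_cancel]
  set M : Matrix (Fin (m+1)) (Fin (m+1)) ℂ := Matrix.of (fun i j : Fin (m+1) =>
        (if i = j ∧ (i : ℕ) < m then (1 : ℂ) else 0)
        + (if (i : ℕ) = m then α j / 2 else 0)
        + (if (j : ℕ) = m then α i / 2 else 0)) with hM
  rw [rank_eq_card_iff_det_ne_zero]
  -- compute the determinant
  have hdet : M.det = α (Fin.last m) - ∑ i : Fin m, (α i.castSucc / 2) * (α i.castSucc / 2) := by
    have h1 : M.det = (M.submatrix finSumFinEquiv finSumFinEquiv).det :=
      (Matrix.det_submatrix_equiv_self _ _).symm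
    have h2 : M.submatrix finSumFinEquiv finSumFinEquiv =
        Matrix.fromBlocks 1
          (Matrix.of fun (i : Fin m) (_ : Fin 1) => α i.castSucc / 2)
          (Matrix.of fun (_ : Fin 1) (j : Fin m) => α j.castSucc / 2)
          (Matrix.of fun (_ : Fin 1) (_ : Fin 1) => α (Fin.last m)) := by
      ext i j
      have hkey : ∀ k : Fin 1, Fin.natAdd m k = Fin.last m := by
        intro k
        ext
        simp [Fin.natAdd, Fin.last, Fin.eq_zero k]
      rcases i with i | i <;> rcases j with j | j
      · simp [hM, finSumFinEquiv, Matrix.one_apply, Fin.ext_iff, Fin.castSucc,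
          Nat.ne_of_lt i.isLt, Nat.ne_of_lt j.isLt]
      · simp [hM, finSumFinEquiv, hkey, Fin.ext_iff, Fin.castSucc,
          Nat.ne_of_lt i.isLt, Fin.last]
      · simp [hM, finSumFinEquiv, hkey, Fin.ext_iff, Fin.castSucc,
          Nat.ne_of_lt j.isLt, Fin.last]
      · simp [hM, finSumFinEquiv, hkey, Fin.ext_iff, Fin.last,
          Nat.lt_irrefl]
    rw [h1, h2, Matrix.det_fromBlocks_one₁₁]
    rw [show ((Matrix.of fun (_ : Fin 1) (_ : Fin 1) => α (Fin.last m)) -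
        (Matrix.of fun (_ : Fin 1) (j : Fin m) => α j.castSucc / 2) *
        (Matrix.of fun (i : Fin m) (_ : Fin 1) => α i.castSucc / 2)).det
        = Matrix.det (Matrix.of fun (_ : Fin 1) (_ : Fin 1) =>
            α (Fin.last m) - ∑ i : Fin m, (α i.castSucc / 2) * (α i.castSucc / 2)) from by
      have : ∀ i j : Fin 1, ((Matrix.of fun (_ : Fin 1) (_ : Fin 1) => α (Fin.last m)) -
          (Matrix.of fun (_ : Fin 1) (j : Fin m) => α j.castSucc / 2) *
          (Matrix.of fun (i : Fin m) (_ : Fin 1) => α i.castSucc / 2)) i j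
          = α (Fin.last m) - ∑ i : Fin m, (α i.castSucc / 2) * (α i.castSucc / 2) := by
        intro i j
        simp [Matrix.mul_apply]
      rw [show ((Matrix.of fun (_ : Fin 1) (_ : Fin 1) => α (Fin.last m)) -
          (Matrix.of fun (_ : Fin 1) (j : Fin m) => α j.castSucc / 2) *
          (Matrix.of fun (i : Fin m) (_ : Fin 1) => α i.castSucc / 2))
          = Matrix.of fun (_ : Fin 1) (_ : Fin 1) =>
            α (Fin.last m) - ∑ i : Fin m, (α i.castSucc / 2) * (α i.castSucc / 2) from by
        ext i j
        exact this i j]]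
    simp [Matrix.det_fin_one]
  -- compute the filtered sum
  have hsum : (∑ i ∈ Finset.univ.filter (fun i : Fin (m+1) => (i : ℕ) < m), (α i)^2)
      = ∑ i : Fin m, (α i.castSucc)^2 := by
    rw [Finset.sum_filter, Fin.sum_univ_castSucc]
    simp
  rw [hsum]
  have hs : ∑ i : Fin m, (α i.castSucc / 2) * (α i.castSucc / 2)
      = (∑ i : Fin m, (α i.castSucc)^2) / 4 := by
    rw [Finset.sum_div]
    exact Finset.sum_congr rfl (fun i _ => by ring)
  have hl : α (Fin.last m) = α ⟨m, by omega⟩ := rfl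
  have hdet2 : M.det = -((∑ i : Fin m, (α i.castSucc)^2) - 4 * α ⟨m, by omega⟩) / 4 := by
    rw [hdet, hs, hl]; ring
  rw [hdet2]
  constructor
  · intro h hc
    apply h
    rw [hc]
    ring
  · intro h hc
    apply h
    rw [div_eq_zero_iff, neg_eq_zero] at hc
    exact hc.resolve_right (by norm_num)
end
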